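/- arXiv:1503.00285 — 2 statements merged into one kernel-verified Lean document; each statement's English description precedes it below -/
import Mathlib

section
/- Let K be a field, A a finite dimensional K-algebra, M a support τ-tilting A-module, and F = Hom_A(M,−). If f: X → Y is a morphism with X, Y ∈ Fac M such that Ff: Hom_A(M,X) → Hom_A(M,Y) is surjective, then f is surjective. -/
open Function

/-- The category `mod R` of finite dimensional (= finitely generated) modules over a
finite dimensional algebra, modeled as bundled finitely generated `R`-modules. -/
structure FdModule (R : Type) [Ring R] : Type 1 where
  carrier : Type
  [isAddCommGroup : AddCommGroup carrier]
  [isModule : Module R carrier]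
  [isFinite : Module.Finite R carrier]

attribute [instance] FdModule.isAddCommGroup FdModule.isModule FdModule.isFinite

instance {R : Type} [Ring R] : CoeSort (FdModule R) Type := ⟨FdModule.carrier⟩

section Defs

variable {R : Type} [Ring R]

/-- A torsion class: a class of modules closed under factor modules and extensions. -/
def IsTorsionClass (T : Set (FdModule R)) : Prop :=
  T.Nonempty ∧
  (∀ X ∈ T, ∀ (Y : FdModule R) (f : X →ₗ[R] Y), Surjective f → Y ∈ T) ∧
  (∀ (X Y Z : FdModule R), X ∈ T → Z ∈ T →
    ∀ (f : X →ₗ[R] Y) (g : Y →ₗ[R] Z),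
      Injective f → Surjective g → Exact f g → Y ∈ T)

/-- A torsion-free class: a class of modules closed under submodules and extensions. -/
def IsTorsionFreeClass (F : Set (FdModule R)) : Prop :=
  F.Nonempty ∧
  (∀ Y ∈ F, ∀ (X : FdModule R) (f : X →ₗ[R] Y), Injective f → X ∈ F) ∧
  (∀ (X Y Z : FdModule R), X ∈ F → Z ∈ F →
    ∀ (f : X →ₗ[R] Y) (g : Y →ₗ[R] Z),
      Injective f → Surjective g → Exact f g → Y ∈ F)

/-- A class of modules is contravariantly finite if every module admits a right approximation. -/
def ContravariantlyFinite (X : Set (FdModule R)) : Prop :=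
  ∀ M : FdModule R, ∃ X₀ ∈ X, ∃ f : X₀ →ₗ[R] M,
    ∀ X' ∈ X, ∀ g : X' →ₗ[R] M, ∃ h : X' →ₗ[R] X₀, f ∘ₗ h = g

/-- A class of modules is covariantly finite if every module admits a left approximation. -/
def CovariantlyFinite (X : Set (FdModule R)) : Prop :=
  ∀ M : FdModule R, ∃ X₀ ∈ X, ∃ f : M →ₗ[R] X₀,
    ∀ X' ∈ X, ∀ g : M →ₗ[R] X', ∃ h : X₀ →ₗ[R] X', h ∘ₗ f = g

def FunctoriallyFinite (X : Set (FdModule R)) : Prop :=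
  ContravariantlyFinite X ∧ CovariantlyFinite X

/-- An indecomposable module: nonzero, and any direct sum decomposition is trivial. -/
def IsIndec (M : FdModule R) : Prop :=
  Nontrivial M ∧ ∀ N L : Submodule R M, IsCompl N L → N = ⊥ ∨ L = ⊥

/-- `Fac M`: the modules generated by `M`, i.e. quotients of finite direct sums of copies of `M`. -/
def Fac (M : FdModule R) : Set (FdModule R) :=
  {X | ∃ (n : ℕ) (f : (Fin n → M) →ₗ[R] X), Surjective f}

/-- `Sub M`: the modules cogenerated by `M`. -/
def Subm (M : FdModule R) : Set (FdModule R) :=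
  {X | ∃ (n : ℕ) (f : X →ₗ[R] (Fin n → M)), Injective f}

/-- A minimal projective presentation `P₁ → P₀ → M → 0`. -/
structure MinProjPres (M : FdModule R) : Type 1 where
  P₁ : FdModule R
  P₀ : FdModule R
  projP₁ : Module.Projective R P₁
  projP₀ : Module.Projective R P₀
  d : P₁ →ₗ[R] P₀
  π : P₀ →ₗ[R] M
  surj : Surjective π
  exact : Exact d π
  /-- `π : P₀ → M` is a projective cover: its kernel is superfluous in `P₀`. -/
  sup₀ : ∀ N : Submodule R P₀, N ⊔ LinearMap.ker π = ⊤ → N = ⊤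
  /-- `P₁ → ker π` is a projective cover: the kernel of `d` is superfluous in `P₁`. -/
  sup₁ : ∀ N : Submodule R P₁, N ⊔ LinearMap.ker d = ⊤ → N = ⊤

/-- `|M| = n`: `M` has exactly `n` pairwise non-isomorphic indecomposable direct summands. -/
def NumIndecSummands (M : FdModule R) (n : ℕ) : Prop :=
  ∃ (D : Fin n → FdModule R) (m : Fin n → ℕ),
    (∀ i, IsIndec (D i)) ∧ (∀ i, 0 < m i) ∧
    (∀ i j, Nonempty ((D i : Type) ≃ₗ[R] (D j : Type)) → i = j) ∧
    Nonempty ((M : Type) ≃ₗ[R] ((p : (i : Fin n) × Fin (m i)) → D p.1))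

end Defs

section Tau

variable (K A : Type) [Field K] [Ring A] [Algebra K A] [FiniteDimensional K A]

instance : Module.Finite Aᵐᵒᵖ A := by
  refine ⟨⟨{1}, ?_⟩⟩
  rw [eq_top_iff]
  intro x _
  have : x ∈ Submodule.span Aᵐᵒᵖ ({1} : Set A) := by
    rw [Submodule.mem_span_singleton]
    exact ⟨MulOpposite.op x, by simp [MulOpposite.smul_eq_mul_unop]⟩
  simpa using this

/-- The regular right `A`-module `A_A`. -/
def regMod : FdModule Aᵐᵒᵖ := { carrier := A }

variable {A}

/-- Left multiplication by `a` on `Hom_A(P, A)`, the left `A`-module structure on the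
`A`-dual of a right `A`-module, given pointwise: `(a • f) x = a * f x`. -/
def lsmulHom {P : FdModule Aᵐᵒᵖ} (a : A) (f : P →ₗ[Aᵐᵒᵖ] A) : P →ₗ[Aᵐᵒᵖ] A where
  toFun x := a * f x
  map_add' x y := by simp [mul_add]
  map_smul' b x := by
    simp only [map_smul, MulOpposite.smul_eq_mul_unop, RingHom.id_apply, mul_assoc]

variable (A)

/-- `T` is the Auslander-Reiten translate `τM = D (coker Hom_A(d, A))` computed from the
minimal projective presentation `pres` of `M`: this is expressed by the existence of a
perfect `K`-bilinear pairing `β` between `T` and `coker (Hom_A(d,A))`, compatible with the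
`A`-module structures.  Functionals on the cokernel of
`Hom_A(d,A) : Hom_A(P₀,A) → Hom_A(P₁,A)` are identified with functionals on `Hom_A(P₁,A)`
vanishing on the image of `Hom_A(d,A)`. -/
def IsTauDual (M : FdModule Aᵐᵒᵖ) (pres : MinProjPres M) (T : FdModule Aᵐᵒᵖ) : Prop :=
  ∃ β : T → (pres.P₁ →ₗ[Aᵐᵒᵖ] A) → K,
    (∀ t t' f, β (t + t') f = β t f + β t' f) ∧
    (∀ t f f', β t (f + f') = β t f + β t f') ∧
    (∀ (k : K) t f, β (MulOpposite.op (algebraMap K A k) • t) f = k * β t f) ∧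
    (∀ (k : K) t f, β t (lsmulHom (algebraMap K A k) f) = k * β t f) ∧
    -- compatibility of the right `A`-action on `T` with the left `A`-action on the cokernel
    (∀ (a : A) t f, β (MulOpposite.op a • t) f = β t (lsmulHom a f)) ∧
    -- `β t` vanishes on the image of `Hom_A(d, A)`
    (∀ t (g : pres.P₀ →ₗ[Aᵐᵒᵖ] A), β t (g ∘ₗ pres.d) = 0) ∧
    -- the pairing is non-degenerate in `t`
    (∀ t, (∀ f, β t f = 0) → t = 0) ∧
    -- every `K`-linear functional vanishing on the image of `Hom_A(d,A)` arises from some `t`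
    (∀ φ : (pres.P₁ →ₗ[Aᵐᵒᵖ] A) → K,
      (∀ f f', φ (f + f') = φ f + φ f') →
      (∀ (k : K) f, φ (lsmulHom (algebraMap K A k) f) = k * φ f) →
      (∀ g : pres.P₀ →ₗ[Aᵐᵒᵖ] A, φ (g ∘ₗ pres.d) = 0) →
      ∃ t, ∀ f, φ f = β t f)

/-- `M` is τ-rigid: `Hom_A(M, τM) = 0`. -/
def IsTauRigid (M : FdModule Aᵐᵒᵖ) : Prop :=
  ∀ (pres : MinProjPres M) (T : FdModule Aᵐᵒᵖ), IsTauDual K A M pres T →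
    ∀ f : M →ₗ[Aᵐᵒᵖ] T, f = 0

/-- `(M, P)` is a support τ-tilting pair, so `M` is a support τ-tilting module. -/
def IsSupportTauTilting (M : FdModule Aᵐᵒᵖ) : Prop :=
  ∃ P : FdModule Aᵐᵒᵖ, Module.Projective Aᵐᵒᵖ P ∧
    IsTauRigid K A M ∧ (∀ f : P →ₗ[Aᵐᵒᵖ] M, f = 0) ∧
    ∃ nM nP nA : ℕ, NumIndecSummands M nM ∧ NumIndecSummands P nP ∧
      NumIndecSummands (regMod A) nA ∧ nM + nP = nA

end Tau

/-- Let `M` be a support τ-tilting `A`-module and `F = Hom_A(M, -)`.  If `f : X → Y` is a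
morphism with `X, Y ∈ Fac M` such that `Ff : Hom_A(M,X) → Hom_A(M,Y)`, `g ↦ f ∘ g`, is
surjective, then `f` is surjective. -/
theorem surjective_of_hom_surjective
    (K A : Type) [Field K] [Ring A] [Algebra K A] [FiniteDimensional K A]
    (M : FdModule Aᵐᵒᵖ) (hM : IsSupportTauTilting K A M)
    (X Y : FdModule Aᵐᵒᵖ) (hX : X ∈ Fac M) (hY : Y ∈ Fac M)
    (f : X →ₗ[Aᵐᵒᵖ] Y)
    (hFf : Surjective (fun g : (M : Type) →ₗ[Aᵐᵒᵖ] (X : Type) => f ∘ₗ g)) :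
    Surjective f := by
  obtain ⟨n, π, hπ⟩ := hY
  choose g hg using fun i : Fin n => hFf (π ∘ₗ LinearMap.single Aᵐᵒᵖ (fun _ : Fin n => (M : Type)) i)
  intro y
  obtain ⟨x, rfl⟩ := hπ y
  refine ⟨∑ i, g i (x i), ?_⟩
  have : π x = π (∑ i, Pi.single i (x i)) := by
    congr 1
    exact (Finset.univ_sum_single x).symm
  rw [this, map_sum, map_sum]
  refine Finset.sum_congr rfl fun i _ => ?_
  have := congrArg (fun h : (M : Type) →ₗ[Aᵐᵒᵖ] (Y : Type) => h (x i)) (hg i)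
  simpa using this
end

section
/- Let T be a K-linear, Hom-finite, Krull–Schmidt triangulated category with a basic silting object S. Let M ∈ (add S) * (add ΣS) be an object with Hom_T(M, ΣM) = 0, and let S' --f--> S'' → M → ΣS' be a triangle in T with S', S'' ∈ add S and f a radical morphism. Then S' and S'' have no non-zero common direct summand. -/
open CategoryTheory Limits Pretriangulated Function

universe u

noncomputable section

variable {C : Type} [Category C] [Preadditive C] [HasZeroObject C]
  [HasShift C ℤ] [∀ n : ℤ, (CategoryTheory.shiftFunctor C n).Additive] [Pretriangulated C]
  [HasFiniteBiproducts C]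

/-- An object of a triangulated category is presilting if `Hom(S, S[k]) = 0` for all `k > 0`. -/
def IsPresilting (S : C) : Prop :=
  ∀ k : ℤ, 0 < k → ∀ f : S ⟶ S⟦k⟧, f = 0

/-- `Hom(X, Y[k]) = 0` for all `k > 0`; for silting objects this is the partial
order `X ≥ Y`. -/
def SiltGE (X Y : C) : Prop :=
  ∀ k : ℤ, 0 < k → ∀ f : X ⟶ Y⟦k⟧, f = 0

/-- A thick subcategory: closed under isomorphisms, shifts, cones and direct summands. -/
def IsThick (S : Set C) : Prop :=
  (∀ X Y : C, (X ≅ Y) → X ∈ S → Y ∈ S) ∧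
  (∀ X ∈ S, ∀ k : ℤ, X⟦k⟧ ∈ S) ∧
  (∀ T ∈ distTriang C, T.obj₁ ∈ S → T.obj₂ ∈ S → T.obj₃ ∈ S) ∧
  (∀ X Y : C, (X ⊞ Y) ∈ S → X ∈ S)

/-- A silting object: presilting, and the smallest thick subcategory containing it is the
whole category. -/
def IsSilting (S : C) : Prop :=
  IsPresilting S ∧ ∀ 𝒮 : Set C, IsThick 𝒮 → S ∈ 𝒮 → ∀ Y : C, Y ∈ 𝒮

/-- An indecomposable object: nonzero, with no nontrivial direct sum decomposition. -/
def IsIndecObj (X : C) : Prop :=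
  ¬ IsZero X ∧ ∀ Y Z : C, Nonempty (X ≅ Y ⊞ Z) → IsZero Y ∨ IsZero Z

/-- A family of objects is basic if its members are indecomposable and pairwise
non-isomorphic. -/
def IsBasicFamily {n : ℕ} (D : Fin n → C) : Prop :=
  (∀ i, IsIndecObj (D i)) ∧ ∀ i j : Fin n, Nonempty (D i ≅ D j) → i = j

/-- `add X`: direct summands of finite direct sums of copies of `X`. -/
def addOf (X : C) : Set C :=
  {Y | ∃ (n : ℕ) (Z : C), Nonempty ((Y ⊞ Z) ≅ ⨁ (fun _ : Fin n => X))}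

/-- `𝒳 * 𝒴`: objects `Z` fitting in a triangle `X → Z → Y → X[1]` with `X ∈ 𝒳`, `Y ∈ 𝒴`. -/
def starOf (𝒳 𝒴 : Set C) : Set C :=
  {Z | ∃ T ∈ distTriang C, T.obj₂ = Z ∧ T.obj₁ ∈ 𝒳 ∧ T.obj₃ ∈ 𝒴}

/-- `add 𝒮` for a class of objects `𝒮`: direct summands of finite direct sums of objects
of `𝒮`. -/
def addOfSet (𝒮 : Set C) : Set C :=
  {Y | ∃ (n : ℕ) (D : Fin n → C) (Z : C), (∀ i, D i ∈ 𝒮) ∧ Nonempty ((Y ⊞ Z) ≅ ⨁ D)}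

/-- The category is Hom-finite over `K`. -/
def HomFinite (K : Type) [Field K] [Linear K C] : Prop :=
  ∀ X Y : C, FiniteDimensional K (X ⟶ Y)

/-- The category is Krull-Schmidt: every object is a finite direct sum of objects with local
endomorphism rings. -/
def IsKrullSchmidt : Prop :=
  ∀ X : C, ∃ (n : ℕ) (D : Fin n → C),
    (∀ i, IsLocalRing (End (D i))) ∧ Nonempty (X ≅ ⨁ D)

/-- The Grothendieck group `K₀` of a triangulated category: the free abelian group on the
objects modulo the relations `[X] - [Y] + [Z] = 0` for each distinguished triangle
`X → Y → Z → X[1]`. -/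
def K0Sub (C : Type) [Category C] [Preadditive C] [HasZeroObject C]
    [HasShift C ℤ] [∀ n : ℤ, (CategoryTheory.shiftFunctor C n).Additive]
    [Pretriangulated C] : AddSubgroup (FreeAbelianGroup C) :=
  AddSubgroup.closure
    {x | ∃ T ∈ distTriang C,
      x = FreeAbelianGroup.of T.obj₁ - FreeAbelianGroup.of T.obj₂ + FreeAbelianGroup.of T.obj₃}

def K0 (C : Type) [Category C] [Preadditive C] [HasZeroObject C]
    [HasShift C ℤ] [∀ n : ℤ, (CategoryTheory.shiftFunctor C n).Additive]
    [Pretriangulated C] : Type :=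
  FreeAbelianGroup C ⧸ K0Sub C

instance : AddCommGroup (K0 C) := QuotientAddGroup.Quotient.addCommGroup _

/-- The class `[X] ∈ K₀(C)` of an object. -/
def K0.cls (X : C) : K0 C := QuotientAddGroup.mk (FreeAbelianGroup.of X)

/-- `G` is the matrix whose `j`-th column is the `g`-vector of `M j` with respect to the
basic silting object with indecomposable summands `S 1, …, S n`, i.e. the coordinate vector
of `[M j]` in the basis `[S 1], …, [S n]` of `K₀(C)`. -/
def GMatrix {n m : ℕ} (S : Fin n → C) (M : Fin m → C) (G : Matrix (Fin n) (Fin m) ℤ) : Prop :=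
  ∀ j, K0.cls (M j) = ∑ i, G i j • K0.cls (S i)

end

section Radical

variable {C : Type} [Category C] [Preadditive C] [HasZeroObject C]
  [HasShift C ℤ] [∀ n : ℤ, (CategoryTheory.shiftFunctor C n).Additive] [Pretriangulated C]
  [HasFiniteBiproducts C]

/-- A morphism `f : S' → S''` is a radical morphism: there are no direct sum decompositions
`S' ≅ U ⊞ U'` and `S'' ≅ V ⊞ V'` with `U ≠ 0` such that the component `U → V` of `f` is an
isomorphism. -/
def IsRadicalMorphism {S' S'' : C} (f : S' ⟶ S'') : Prop :=
  ¬ ∃ (U U' V V' : C) (e : S' ≅ U ⊞ U') (e' : S'' ≅ V ⊞ V'),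
      ¬ IsZero U ∧ IsIso (biprod.inl ≫ e.inv ≫ f ≫ e'.hom ≫ biprod.fst : U ⟶ V)

/-- `U` is a direct summand of `X`. -/
def IsSummand (U X : C) : Prop :=
  ∃ (i : U ⟶ X) (r : X ⟶ U), i ≫ r = 𝟙 U

end Radical

section Aux

variable {C : Type} [Category C] [Preadditive C] [HasZeroObject C]
  [HasShift C ℤ] [∀ n : ℤ, (CategoryTheory.shiftFunctor C n).Additive] [Pretriangulated C]
  [HasFiniteBiproducts C]

/-- A split mono in a pretriangulated category admits a biproduct decomposition. -/
lemma aux_split_mono_biprod {U S' : C} (a : U ⟶ S') (ρ : S' ⟶ U) (haρ : a ≫ ρ = 𝟙 U) :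
    ∃ (N : C) (e : S' ≅ U ⊞ N), e.hom ≫ biprod.fst = ρ ∧ biprod.inl ≫ e.inv = a := by
  obtain ⟨N, q, δ, hT⟩ := Pretriangulated.distinguished_cocone_triangle a
  have haq : a ≫ q = 0 := Pretriangulated.comp_distTriang_mor_zero₁₂ _ hT
  have hδ : δ = 0 := by
    have h31 : δ ≫ a⟦(1 : ℤ)⟧' = 0 := Pretriangulated.comp_distTriang_mor_zero₃₁ _ hT
    have h2 : δ ≫ (a ≫ ρ)⟦(1 : ℤ)⟧' = 0 := by
      rw [Functor.map_comp, ← Category.assoc, h31, zero_comp]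
    rw [haρ] at h2
    simpa using h2
  obtain ⟨s, hs⟩ : ∃ s : N ⟶ S', 𝟙 N = s ≫ q :=
    Pretriangulated.Triangle.coyoneda_exact₃ _ hT (𝟙 N) (by simp [hδ]; exact Category.id_comp _)
  have hs'q : (s - s ≫ ρ ≫ a) ≫ q = 𝟙 N := by
    simp only [Preadditive.sub_comp, Category.assoc]
    rw [haq]
    simp [← hs]
  have hs'ρ : (s - s ≫ ρ ≫ a) ≫ ρ = 0 := by
    simp only [Preadditive.sub_comp, Category.assoc]
    rw [haρ]
    simp
  set s' : N ⟶ S' := s - s ≫ ρ ≫ a with hs'def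
  refine ⟨N, ⟨biprod.lift ρ q, biprod.desc a s', ?_, ?_⟩, by simp, by simp⟩
  · -- lift ρ q ≫ desc a s' = 𝟙 S'
    have htq : (𝟙 S' - biprod.lift ρ q ≫ biprod.desc a s') ≫ q = 0 := by
      simp only [Preadditive.sub_comp, Category.id_comp, biprod.lift_desc,
        Preadditive.add_comp, Category.assoc]
      rw [haq, hs'q]
      simp
    obtain ⟨t'', ht''⟩ : ∃ t'' : S' ⟶ U,
        𝟙 S' - biprod.lift ρ q ≫ biprod.desc a s' = t'' ≫ a :=
      Pretriangulated.Triangle.coyoneda_exact₂ _ hT _ htq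
    have htρ : (𝟙 S' - biprod.lift ρ q ≫ biprod.desc a s') ≫ ρ = 0 := by
      simp only [Preadditive.sub_comp, Category.id_comp, biprod.lift_desc,
        Preadditive.add_comp, Category.assoc]
      rw [haρ, hs'ρ]
      simp
    have ht''0 : t'' = 0 := by
      rw [ht''] at htρ
      simpa [Category.assoc, haρ] using htρ
    have ht0 : 𝟙 S' - biprod.lift ρ q ≫ biprod.desc a s' = 0 := by
      rw [ht'', ht''0, zero_comp]
    exact (sub_eq_zero.mp ht0).symm
  · -- desc a s' ≫ lift ρ q = 𝟙 (U ⊞ N)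
    ext
    · simp [haρ]
    · simp [haq]
    · simp [hs'ρ]
    · simp [hs'q]

lemma aux_isIso_of_isUnit {D : Type} [Category D] {U : D} (x : U ⟶ U)
    (hx : IsUnit (M := End U) x) : IsIso x := by
  obtain ⟨v, hv⟩ := hx
  refine ⟨v.inv, ?_, ?_⟩
  · have h1 : v.inv * v.val = 1 := v.inv_val
    rw [CategoryTheory.End.mul_def, hv] at h1
    exact h1
  · have h2 : v.val * v.inv = 1 := v.val_inv
    rw [CategoryTheory.End.mul_def, hv] at h2
    exact h2

/-- Maps `X ⟶ Y⟦1⟧` vanish for `X, Y ∈ add S₀` with `S₀` presilting. -/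
lemma aux_addOf_hom_shift_zero {S₀ : C} (hpre : IsPresilting S₀) {X Y : C}
    (hX : X ∈ addOf S₀) (hY : Y ∈ addOf S₀) (u : X ⟶ Y⟦(1 : ℤ)⟧) : u = 0 := by
  obtain ⟨nX, Z, ⟨eX⟩⟩ := hX
  obtain ⟨nY, W, ⟨eY⟩⟩ := hY
  set P := ⨁ (fun _ : Fin nX => S₀)
  set Q := ⨁ (fun _ : Fin nY => S₀)
  have key : ∀ v : P ⟶ Q⟦(1 : ℤ)⟧, v = 0 := by
    intro v
    apply biproduct.hom_ext'
    intro j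
    have hmono : Mono ((Functor.mapBiproduct (shiftFunctor C (1 : ℤ))
        (fun _ : Fin nY => S₀)).hom) := inferInstance
    rw [← cancel_mono ((Functor.mapBiproduct (shiftFunctor C (1 : ℤ))
        (fun _ : Fin nY => S₀)).hom)]
    apply biproduct.hom_ext
    intro k
    rw [Category.assoc, Category.assoc]
    have : (biproduct.ι (fun _ : Fin nX => S₀) j ≫
        (v ≫ (Functor.mapBiproduct (shiftFunctor C (1 : ℤ)) (fun _ : Fin nY => S₀)).hom ≫
          biproduct.π _ k) : S₀ ⟶ S₀⟦(1 : ℤ)⟧) = 0 :=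
      hpre 1 one_pos _
    rw [this, comp_zero, zero_comp, zero_comp]
  have hsp : (biprod.inl ≫ eX.hom : X ⟶ P) ≫ (eX.inv ≫ biprod.fst : P ⟶ X) = 𝟙 X := by
    simp
  have hsp' : (biprod.inl ≫ eY.hom : Y ⟶ Q) ≫ (eY.inv ≫ biprod.fst : Q ⟶ Y) = 𝟙 Y := by
    simp
  have hY1 : 𝟙 (Y⟦(1 : ℤ)⟧) = ((biprod.inl ≫ eY.hom : Y ⟶ Q)⟦(1 : ℤ)⟧') ≫
      ((eY.inv ≫ biprod.fst : Q ⟶ Y)⟦(1 : ℤ)⟧') := by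
    rw [← CategoryTheory.Functor.map_comp, hsp', CategoryTheory.Functor.map_id]
  calc u = 𝟙 X ≫ u ≫ 𝟙 (Y⟦(1 : ℤ)⟧) := by simp
    _ = ((biprod.inl ≫ eX.hom) ≫ (eX.inv ≫ biprod.fst)) ≫ u ≫
          (((biprod.inl ≫ eY.hom : Y ⟶ Q)⟦(1 : ℤ)⟧') ≫
           ((eY.inv ≫ biprod.fst : Q ⟶ Y)⟦(1 : ℤ)⟧')) := by
        rw [hsp, ← hY1]
    _ = (biprod.inl ≫ eX.hom) ≫ (((eX.inv ≫ biprod.fst) ≫ u ≫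
          ((biprod.inl ≫ eY.hom : Y ⟶ Q)⟦(1 : ℤ)⟧')) ≫
          ((eY.inv ≫ biprod.fst : Q ⟶ Y)⟦(1 : ℤ)⟧')) := by
        simp only [Category.assoc]
    _ = 0 := by
        rw [key ((eX.inv ≫ biprod.fst) ≫ u ≫ ((biprod.inl ≫ eY.hom : Y ⟶ Q)⟦(1 : ℤ)⟧'))]
        simp

end Aux

/-- Let `S` be a basic silting object of a `K`-linear, Hom-finite, Krull-Schmidt
triangulated category, `M ∈ (add S) * (add ΣS)` with `Hom(M, ΣM) = 0`, and let
`S' → S'' → M → ΣS'` be a triangle with `S', S'' ∈ add S` and `f : S' → S''` a radical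
morphism.  Then `S'` and `S''` have no nonzero common direct summand. -/
theorem no_common_summand_of_radical_presentation
    (K : Type) [Field K]
    {C : Type} [Category C] [Preadditive C] [HasZeroObject C]
    [HasShift C ℤ] [∀ n : ℤ, (CategoryTheory.shiftFunctor C n).Additive] [Pretriangulated C]
    [HasFiniteBiproducts C] [CategoryTheory.Linear K C]
    (hfin : HomFinite (C := C) K) (hKS : IsKrullSchmidt (C := C))
    {n : ℕ} (Sfam : Fin n → C) (hSb : IsBasicFamily Sfam) (hS : IsSilting (⨁ Sfam))
    (M : C)
    (hM : M ∈ starOf (addOf (⨁ Sfam)) (addOf ((⨁ Sfam)⟦(1 : ℤ)⟧)))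
    (hrigid : ∀ f : M ⟶ M⟦(1 : ℤ)⟧, f = 0)
    (S' S'' : C) (f : S' ⟶ S'') (g : S'' ⟶ M) (h : M ⟶ S'⟦(1 : ℤ)⟧)
    (htri : Triangle.mk f g h ∈ distTriang C)
    (hS' : S' ∈ addOf (⨁ Sfam)) (hS'' : S'' ∈ addOf (⨁ Sfam))
    (hrad : IsRadicalMorphism f) :
    ¬ ∃ U : C, ¬ IsZero U ∧ IsSummand U S' ∧ IsSummand U S'' := by
  rintro ⟨U₀, hU₀, ⟨i₀, r₀, hir₀⟩, ⟨i₀'', r₀'', hir₀''⟩⟩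
  -- Step A: replace U₀ by a summand with local endomorphism ring
  obtain ⟨m, D, hloc, ⟨eU⟩⟩ := hKS U₀
  have hm : m ≠ 0 := by
    rintro rfl
    apply hU₀
    refine IsZero.of_iso ?_ eU
    rw [IsZero.iff_id_eq_zero]
    apply biproduct.hom_ext'
    exact fun j => j.elim0
  set j : Fin m := ⟨0, Nat.pos_of_ne_zero hm⟩
  set U : C := D j with hUdef
  haveI : IsLocalRing (End U) := hloc j
  have hU : ¬ IsZero U := by
    intro hz
    rw [IsZero.iff_id_eq_zero] at hz
    exact one_ne_zero (α := End U) hz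
  set i : U ⟶ S' := biproduct.ι D j ≫ eU.inv ≫ i₀ with hidef
  set r : S' ⟶ U := r₀ ≫ eU.hom ≫ biproduct.π D j with hrdef
  have hir : i ≫ r = 𝟙 U := by
    simp only [hidef, hrdef, Category.assoc]
    rw [reassoc_of% hir₀]
    simp [biproduct.ι_π_self]
    rfl
  set i'' : U ⟶ S'' := biproduct.ι D j ≫ eU.inv ≫ i₀'' with hi''def
  set r'' : S'' ⟶ U := r₀'' ≫ eU.hom ≫ biproduct.π D j with hr''def
  have hir'' : i'' ≫ r'' = 𝟙 U := by
    simp only [hi''def, hr''def, Category.assoc]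
    rw [reassoc_of% hir₀'']
    simp [biproduct.ι_π_self]
    rfl
  -- Step B: the homological argument
  have hvan : ∀ {X Y : C}, X ∈ addOf (⨁ Sfam) → Y ∈ addOf (⨁ Sfam) →
      ∀ u : X ⟶ Y⟦(1 : ℤ)⟧, u = 0 := fun hX hY u => aux_addOf_hom_shift_zero hS.1 hX hY u
  set φ : S' ⟶ S'' := r ≫ i'' with hφdef
  have h1 : (h ≫ φ⟦(1 : ℤ)⟧') ≫ g⟦(1 : ℤ)⟧' = 0 := by
    have h0 : h ≫ (φ ≫ g)⟦(1 : ℤ)⟧' = 0 := hrigid _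
    rw [Functor.map_comp] at h0
    simpa using h0
  obtain ⟨ψ, hψ⟩ : ∃ ψ : M ⟶ S'⟦(1 : ℤ)⟧,
      h ≫ φ⟦(1 : ℤ)⟧' = ψ ≫ (-(f⟦(1 : ℤ)⟧')) :=
    Pretriangulated.Triangle.coyoneda_exact₁ _
      (Pretriangulated.rot_of_distTriang _ htri) (h ≫ φ⟦(1 : ℤ)⟧') h1
  have hψ0 : (g ≫ ψ : S'' ⟶ S'⟦(1 : ℤ)⟧) = 0 := hvan hS'' hS' _
  obtain ⟨χ', hχ'⟩ : ∃ χ' : S'⟦(1 : ℤ)⟧ ⟶ S'⟦(1 : ℤ)⟧, ψ = h ≫ χ' :=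
    Pretriangulated.Triangle.yoneda_exact₂ _
      (Pretriangulated.rot_of_distTriang _ htri) ψ hψ0
  obtain ⟨χ, hχ⟩ := (shiftFunctor C (1 : ℤ)).map_surjective χ'
  have h2 : h ≫ (φ + χ ≫ f)⟦(1 : ℤ)⟧' = 0 := by
    rw [hχ', ← hχ] at hψ
    simp only [Functor.map_add, Functor.map_comp, Preadditive.comp_add, Category.assoc,
      Preadditive.comp_neg, Preadditive.neg_comp] at hψ ⊢
    rw [hψ]
    simp
  obtain ⟨ε, hε⟩ : ∃ ε : S''⟦(1 : ℤ)⟧ ⟶ S''⟦(1 : ℤ)⟧,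
      (φ + χ ≫ f)⟦(1 : ℤ)⟧' = (-(f⟦(1 : ℤ)⟧')) ≫ ε :=
    Pretriangulated.Triangle.yoneda_exact₃ _
      (Pretriangulated.rot_of_distTriang _ htri) ((φ + χ ≫ f)⟦(1 : ℤ)⟧') h2
  obtain ⟨θ, hθ⟩ := (shiftFunctor C (1 : ℤ)).map_surjective ε
  have h3 : φ + χ ≫ f = -(f ≫ θ) := by
    apply (shiftFunctor C (1 : ℤ)).map_injective
    rw [hε, ← hθ]
    simp [Functor.map_comp]
  have h4 : φ = -(f ≫ θ) - χ ≫ f := eq_sub_of_add_eq h3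
  -- 1_U decomposes as a sum of two morphisms factoring through f
  have hid : i ≫ φ ≫ r'' = 𝟙 U := by
    rw [hφdef]
    calc i ≫ (r ≫ i'') ≫ r'' = (i ≫ r) ≫ (i'' ≫ r'') := by simp only [Category.assoc]
    _ = 𝟙 U := by rw [hir, hir'']; simp
  set x : U ⟶ U := (-(i ≫ χ)) ≫ f ≫ r'' with hxdef
  set y : U ⟶ U := i ≫ f ≫ (-(θ ≫ r'')) with hydef
  have hxy : 𝟙 U = x + y := by
    rw [← hid, h4, hxdef, hydef]
    simp only [Preadditive.comp_sub, Preadditive.sub_comp, Preadditive.comp_neg,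
      Preadditive.neg_comp, Category.assoc]
    abel
  -- Step C: locality gives an invertible component
  have hxy' : @Eq (End U) (x + y) 1 := hxy.symm
  have hunit : IsUnit (M := End U) x ∨ IsUnit (M := End U) y :=
    IsLocalRing.isUnit_or_isUnit_of_add_one (R := End U) hxy' 
  have key : ∃ (a : U ⟶ S') (b : S'' ⟶ U), IsIso (a ≫ f ≫ b) := by
    rcases hunit with hu | hu
    · refine ⟨-(i ≫ χ), r'', ?_⟩
      have hxiso := aux_isIso_of_isUnit x hu
      rwa [hxdef] at hxiso
    · refine ⟨i, -(θ ≫ r''), ?_⟩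
      have hyiso := aux_isIso_of_isUnit y hu
      rwa [hydef] at hyiso
  obtain ⟨a, b, hab⟩ := key
  -- Step D: build the decompositions and contradict radicality
  haveI : IsIso (a ≫ f ≫ b) := hab
  have hsplit1 : a ≫ f ≫ b ≫ inv (a ≫ f ≫ b) = 𝟙 U := by
    rw [show a ≫ f ≫ b ≫ inv (a ≫ f ≫ b) = (a ≫ f ≫ b) ≫ inv (a ≫ f ≫ b) by
      simp only [Category.assoc], IsIso.hom_inv_id]
  obtain ⟨N, e, he1, he2⟩ := aux_split_mono_biprod a (f ≫ b ≫ inv (a ≫ f ≫ b)) hsplit1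
  have hsplit2 : (a ≫ f) ≫ (b ≫ inv (a ≫ f ≫ b)) = 𝟙 U := by
    rw [show (a ≫ f) ≫ b ≫ inv (a ≫ f ≫ b) = (a ≫ f ≫ b) ≫ inv (a ≫ f ≫ b) by
      simp only [Category.assoc], IsIso.hom_inv_id]
  obtain ⟨N'', e', he1', he2'⟩ := aux_split_mono_biprod (a ≫ f) (b ≫ inv (a ≫ f ≫ b)) hsplit2
  apply hrad
  refine ⟨U, N, U, N'', e, e', hU, ?_⟩
  have hcomp : (biprod.inl ≫ e.inv ≫ f ≫ e'.hom ≫ biprod.fst : U ⟶ U) = 𝟙 U := by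
    rw [he1', reassoc_of% he2]
    rw [show a ≫ f ≫ b ≫ inv (a ≫ f ≫ b) = (a ≫ f ≫ b) ≫ inv (a ≫ f ≫ b) by
      simp only [Category.assoc], IsIso.hom_inv_id]
  rw [hcomp]
  infer_instance
end
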